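/- Let n = n₁+⋯+n_k = p+q with k ≥ 4 and min(p,q) = 2, all n_i ≥ 1. Set G = U(n), L = U(n₁)×⋯×U(n_k), G' = O(n), and let H ⊂ U(n) be conjugate by an element of O(n) to the block-diagonal U(2)×U(n−2). Then L·G'·H ≠ G. -/

import Mathlib

open Matrix
open scoped Pointwise

/-- The block index of position `i` for the partition `n = ns 0 + ⋯ + ns (k-1)`. -/
def blkIdx (ns : ℕ → ℕ) (k i : ℕ) : ℕ :=
  ((Finset.range k).filter (fun j => (∑ t ∈ Finset.range (j+1), ns t) ≤ i)).card

/-- `U(n₁) × ⋯ × U(n_k)` embedded block-diagonally in `U(n)`. -/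
def blockUnitary (n k : ℕ) (ns : ℕ → ℕ) : Set (Matrix (Fin n) (Fin n) ℂ) :=
  {u | u ∈ Matrix.unitaryGroup (Fin n) ℂ ∧
    ∀ i j : Fin n, blkIdx ns k i.1 ≠ blkIdx ns k j.1 → u i j = 0}

/-- `O(n)` viewed inside `U(n)`: unitary matrices with real entries. -/
def realOrthogonal (n : ℕ) : Set (Matrix (Fin n) (Fin n) ℂ) :=
  {g | g ∈ Matrix.unitaryGroup (Fin n) ℂ ∧ ∀ i j, (g i j).im = 0}

lemma sum_two {n : ℕ} (f : Fin n → ℂ) (p0 p1 : Fin n) (h01 : p0 ≠ p1)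
    (hz : ∀ x, x ≠ p0 → x ≠ p1 → f x = 0) :
    ∑ x, f x = f p0 + f p1 := by
  have h1 : ∑ x ∈ ({p0, p1} : Finset (Fin n)), f x = ∑ x, f x := by
    apply Finset.sum_subset (Finset.subset_univ _)
    intro x _ hx
    simp only [Finset.mem_insert, Finset.mem_singleton, not_or] at hx
    exact hz x hx.1 hx.2
  rw [← h1, Finset.sum_insert (by simp [h01]), Finset.sum_singleton]

lemma sum_four {n : ℕ} (f : Fin n → ℂ) (p0 p1 p2 p3 : Fin n)
    (h01 : p0 ≠ p1) (h02 : p0 ≠ p2) (h03 : p0 ≠ p3)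
    (h12 : p1 ≠ p2) (h13 : p1 ≠ p3) (h23 : p2 ≠ p3)
    (hz : ∀ x, x ≠ p0 → x ≠ p1 → x ≠ p2 → x ≠ p3 → f x = 0) :
    ∑ x, f x = f p0 + f p1 + f p2 + f p3 := by
  have h1 : ∑ x ∈ ({p0, p1, p2, p3} : Finset (Fin n)), f x = ∑ x, f x := by
    apply Finset.sum_subset (Finset.subset_univ _)
    intro x _ hx
    simp only [Finset.mem_insert, Finset.mem_singleton, not_or] at hx
    exact hz x hx.1 hx.2.1 hx.2.2.1 hx.2.2.2
  rw [← h1, Finset.sum_insert (by simp [h01, h02, h03]),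
    Finset.sum_insert (by simp [h12, h13]), Finset.sum_insert (by simp [h23]),
    Finset.sum_singleton]
  ring

lemma blkIdx_sum {ns : ℕ → ℕ} {k : ℕ} (hns : ∀ i < k, 0 < ns i) {a : ℕ} (ha : a < k) :
    blkIdx ns k (∑ t ∈ Finset.range a, ns t) = a := by
  unfold blkIdx
  have h : (Finset.range k).filter
      (fun j => (∑ t ∈ Finset.range (j+1), ns t) ≤ ∑ t ∈ Finset.range a, ns t)
      = Finset.range a := by
    ext j
    simp only [Finset.mem_filter, Finset.mem_range]
    constructor
    · rintro ⟨hjk, hle⟩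
      by_contra hja
      push_neg at hja
      have h1 : ∑ t ∈ Finset.range (a+1), ns t ≤ ∑ t ∈ Finset.range (j+1), ns t :=
        Finset.sum_le_sum_of_subset (Finset.range_subset_range.2 (by omega))
      rw [Finset.sum_range_succ] at h1
      have := hns a ha
      omega
    · intro hja
      exact ⟨by omega,
        Finset.sum_le_sum_of_subset (Finset.range_subset_range.2 (by omega))⟩
  rw [h, Finset.card_range]

lemma blkIdx_two {n m : ℕ} (hn4 : 4 ≤ n) (hm : m < n) :
    blkIdx (fun t => if t = 0 then 2 else n - 2) 2 m = if m < 2 then 0 else 1 := by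
  unfold blkIdx
  rw [show Finset.range 2 = {0, 1} from rfl]
  rw [Finset.filter_insert, Finset.filter_singleton]
  simp only [Finset.sum_range_succ, Finset.sum_range_zero]
  norm_num
  split_ifs <;> simp_all <;> omega

lemma imzero_mul (a b : ℂ) (ha : a.im = 0) (hb : b.im = 0) : (a*b).im = 0 := by
  rw [Complex.mul_im, ha, hb]; ring

lemma real_mul {n : ℕ} {A B : Matrix (Fin n) (Fin n) ℂ}
    (hA : ∀ i j, (A i j).im = 0) (hB : ∀ i j, (B i j).im = 0) :
    ∀ i j, ((A * B) i j).im = 0 := by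
  intro i j
  rw [Matrix.mul_apply, Complex.im_sum]
  apply Finset.sum_eq_zero
  intro x _
  exact imzero_mul _ _ (hA i x) (hB x j)

lemma real_star {n : ℕ} {A : Matrix (Fin n) (Fin n) ℂ}
    (hA : ∀ i j, (A i j).im = 0) :
    ∀ i j, ((star A) i j).im = 0 := by
  intro i j
  have : (star A) i j = star (A j i) := rfl
  rw [this, Complex.star_def, Complex.conj_im, hA]
  ring

set_option maxHeartbeats 2000000 in
/-- Proposition 5.7: `n = n₁+⋯+n_k = p+q`, `k ≥ 4`, `min(p,q) = 2`,
all `nᵢ ≥ 1`; `L = U(n₁)×⋯×U(n_k)` block-diagonal, `G' = O(n)`, and `H` an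
`O(n)`-conjugate of the block-diagonal `U(2)×U(n−2)`.  Then `L·G'·H ⊊ U(n)`. -/
theorem k_blocks_minpq_two_not_surjective
    (n k p q : ℕ) (hk : 4 ≤ k) (ns : ℕ → ℕ) (hns : ∀ i < k, 0 < ns i)
    (hn : n = ∑ t ∈ Finset.range k, ns t)
    (hpq : n = p + q) (hmin : min p q = 2)
    (H : Set (Matrix (Fin n) (Fin n) ℂ))
    (w : Matrix (Fin n) (Fin n) ℂ) (hw : w ∈ realOrthogonal n)
    (hH : H = (fun x => w * x * w⁻¹) ''
      blockUnitary n 2 (fun t => if t = 0 then 2 else n - 2)) :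
    blockUnitary n k ns * realOrthogonal n * H
      ≠ (Matrix.unitaryGroup (Fin n) ℂ : Set (Matrix (Fin n) (Fin n) ℂ)) := by
  intro hEQ
  -- positions of the first row of each block
  have hrlt : ∀ a b : ℕ, a < b → b ≤ k →
      (∑ t ∈ Finset.range a, ns t) < ∑ t ∈ Finset.range b, ns t := by
    intro a b hab hbk
    have h1 : ∑ t ∈ Finset.range (a+1), ns t ≤ ∑ t ∈ Finset.range b, ns t :=
      Finset.sum_le_sum_of_subset (Finset.range_subset_range.2 (by omega))
    rw [Finset.sum_range_succ] at h1
    have := hns a (by omega)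
    omega
  have hrn : ∀ a : ℕ, a < k → (∑ t ∈ Finset.range a, ns t) < n := by
    intro a ha
    rw [hn]
    exact hrlt a k ha le_rfl
  have hn4 : 4 ≤ n := by
    have h0 := hrlt 0 1 (by omega) (by omega)
    have h1 := hrlt 1 2 (by omega) (by omega)
    have h2 := hrlt 2 3 (by omega) (by omega)
    have h3 := hrn 3 (by omega)
    simp only [Finset.sum_range_zero] at h0
    omega

  set r : ℕ → ℕ := fun a => ∑ t ∈ Finset.range a, ns t with hrdef
  set q0 : Fin n := ⟨r 0, hrn 0 (by omega)⟩ with hq0def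
  set q1 : Fin n := ⟨r 1, hrn 1 (by omega)⟩ with hq1def
  set q2 : Fin n := ⟨r 2, hrn 2 (by omega)⟩ with hq2def
  set q3 : Fin n := ⟨r 3, hrn 3 (by omega)⟩ with hq3def
  have hblk : ∀ a : ℕ, a < k → blkIdx ns k (r a) = a := fun a ha => blkIdx_sum hns ha
  have hb0 : blkIdx ns k (q0 : ℕ) = 0 := hblk 0 (by omega)
  have hb1 : blkIdx ns k (q1 : ℕ) = 1 := hblk 1 (by omega)
  have hb2 : blkIdx ns k (q2 : ℕ) = 2 := hblk 2 (by omega)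
  have hb3 : blkIdx ns k (q3 : ℕ) = 3 := hblk 3 (by omega)
  have hd01 : q0 ≠ q1 := Fin.ne_of_val_ne (Nat.ne_of_lt (hrlt 0 1 (by omega) (by omega)))
  have hd02 : q0 ≠ q2 := Fin.ne_of_val_ne (Nat.ne_of_lt (hrlt 0 2 (by omega) (by omega)))
  have hd03 : q0 ≠ q3 := Fin.ne_of_val_ne (Nat.ne_of_lt (hrlt 0 3 (by omega) (by omega)))
  have hd12 : q1 ≠ q2 := Fin.ne_of_val_ne (Nat.ne_of_lt (hrlt 1 2 (by omega) (by omega)))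
  have hd13 : q1 ≠ q3 := Fin.ne_of_val_ne (Nat.ne_of_lt (hrlt 1 3 (by omega) (by omega)))
  have hd23 : q2 ≠ q3 := Fin.ne_of_val_ne (Nat.ne_of_lt (hrlt 2 3 (by omega) (by omega)))
  -- the two special columns
  set C0 : Fin n → ℂ := fun i =>
    if i = q0 ∨ i = q1 ∨ i = q2 ∨ i = q3 then (1/2 : ℂ) else 0 with hC0def
  set C1 : Fin n → ℂ := fun i =>
    if i = q0 then 0 else if i = q1 then (1/2 : ℂ) else if i = q2 then Complex.I/2
      else if i = q3 then -(1+Complex.I)/2 else 0 with hC1def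
  have hC0zero : ∀ x, x ≠ q0 → x ≠ q1 → x ≠ q2 → x ≠ q3 → C0 x = 0 := by
    intro x h0 h1 h2 h3; simp [hC0def, h0, h1, h2, h3]
  have hC1zero : ∀ x, x ≠ q0 → x ≠ q1 → x ≠ q2 → x ≠ q3 → C1 x = 0 := by
    intro x h0 h1 h2 h3; simp [hC1def, h0, h1, h2, h3]
  -- values
  have hC0q0 : C0 q0 = 1/2 := by simp [hC0def]
  have hC0q1 : C0 q1 = 1/2 := by simp [hC0def]
  have hC0q2 : C0 q2 = 1/2 := by simp [hC0def]
  have hC0q3 : C0 q3 = 1/2 := by simp [hC0def]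
  have hC1q0 : C1 q0 = 0 := by simp [hC1def]
  have hC1q1 : C1 q1 = 1/2 := by simp [hC1def, hd01.symm]
  have hC1q2 : C1 q2 = Complex.I/2 := by simp [hC1def, hd02.symm, hd12.symm]
  have hC1q3 : C1 q3 = -(1+Complex.I)/2 := by
    simp [hC1def, hd03.symm, hd13.symm, hd23.symm]
  -- orthonormality of the two columns
  have hipC00 : ∑ x, (starRingEnd ℂ) (C0 x) * C0 x = 1 := by
    rw [sum_four _ q0 q1 q2 q3 hd01 hd02 hd03 hd12 hd13 hd23
      (fun x h0 h1 h2 h3 => by rw [hC0zero x h0 h1 h2 h3]; simp)]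
    rw [hC0q0, hC0q1, hC0q2, hC0q3]
    simp [map_div₀, _root_.map_one, _root_.map_ofNat]
    norm_num
  have hipC01 : ∑ x, (starRingEnd ℂ) (C0 x) * C1 x = 0 := by
    rw [sum_four _ q0 q1 q2 q3 hd01 hd02 hd03 hd12 hd13 hd23
      (fun x h0 h1 h2 h3 => by rw [hC1zero x h0 h1 h2 h3]; simp)]
    rw [hC0q0, hC0q1, hC0q2, hC0q3, hC1q0, hC1q1, hC1q2, hC1q3]
    simp [map_div₀, _root_.map_one, _root_.map_ofNat]
    ring
  have hipC10 : ∑ x, (starRingEnd ℂ) (C1 x) * C0 x = 0 := by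
    rw [sum_four _ q0 q1 q2 q3 hd01 hd02 hd03 hd12 hd13 hd23
      (fun x h0 h1 h2 h3 => by rw [hC0zero x h0 h1 h2 h3]; simp)]
    rw [hC0q0, hC0q1, hC0q2, hC0q3, hC1q0, hC1q1, hC1q2, hC1q3]
    simp [map_div₀, _root_.map_add, _root_.map_one, _root_.map_ofNat, Complex.conj_I]
    ring
  have hipC11 : ∑ x, (starRingEnd ℂ) (C1 x) * C1 x = 1 := by
    rw [sum_four _ q0 q1 q2 q3 hd01 hd02 hd03 hd12 hd13 hd23
      (fun x h0 h1 h2 h3 => by rw [hC1zero x h0 h1 h2 h3]; simp)]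
    rw [hC1q0, hC1q1, hC1q2, hC1q3]
    simp [map_div₀, _root_.map_add, _root_.map_one, _root_.map_ofNat, Complex.conj_I]
    ring_nf
    simp [Complex.I_sq]
    ring
  have h0n : 0 < n := by omega
  have h1n : 1 < n := by omega
  obtain ⟨e0, he0v⟩ : ∃ x : Fin n, (x : ℕ) = 0 := ⟨⟨0, h0n⟩, rfl⟩
  obtain ⟨e1, he1v⟩ : ∃ x : Fin n, (x : ℕ) = 1 := ⟨⟨1, h1n⟩, rfl⟩
  have he01 : e0 ≠ e1 := by rw [Fin.ne_iff_vne, he0v, he1v]; omega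
  obtain ⟨v, hve0, hve1⟩ : ∃ v : Fin n → EuclideanSpace ℂ (Fin n),
      v e0 = C0 ∧ v e1 = C1 :=
    ⟨fun j => if j = e0 then WithLp.toLp 2 C0 else if j = e1 then WithLp.toLp 2 C1 else 0, by simp,
      by simp [he01.symm]⟩
  have hipC00' : ∑ x, C0 x * (starRingEnd ℂ) (C0 x) = 1 := by
    rw [← hipC00]; exact Finset.sum_congr rfl (fun x _ => mul_comm _ _)
  have hipC01' : ∑ x, C1 x * (starRingEnd ℂ) (C0 x) = 0 := by
    rw [← hipC01]; exact Finset.sum_congr rfl (fun x _ => mul_comm _ _)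
  have hipC10' : ∑ x, C0 x * (starRingEnd ℂ) (C1 x) = 0 := by
    rw [← hipC10]; exact Finset.sum_congr rfl (fun x _ => mul_comm _ _)
  have hipC11' : ∑ x, C1 x * (starRingEnd ℂ) (C1 x) = 1 := by
    rw [← hipC11]; exact Finset.sum_congr rfl (fun x _ => mul_comm _ _)
  have horth : Orthonormal ℂ (({e0, e1} : Set (Fin n)).restrict v) := by
    rw [orthonormal_iff_ite]
    have hv0 : ∀ i, @WithLp.ofLp 2 (Fin n → ℂ) (v e0) i = C0 i := fun i => congrFun hve0 i
    have hv1 : ∀ i, @WithLp.ofLp 2 (Fin n → ℂ) (v e1) i = C1 i := fun i => congrFun hve1 i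
    rintro ⟨x, hx⟩ ⟨y, hy⟩
    have hx' : x = e0 ∨ x = e1 := hx
    have hy' : y = e0 ∨ y = e1 := hy
    rcases hx' with rfl | rfl <;> rcases hy' with rfl | rfl <;>
      simp only [Set.restrict_apply, Subtype.mk.injEq] <;>
      rw [PiLp.inner_apply] <;>
      simp only [RCLike.inner_apply, Set.domRestrict_apply, hv0, hv1] <;>
      skip
    case inl.inl =>
      convert hipC00' using 3
      · exact congrFun hve0 _
      · exact congrArg _ (congrFun hve0 _)
      · simp [he01, he01.symm]
    case inl.inr =>
      convert hipC01' using 3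
      · exact congrFun hve1 _
      · exact congrArg _ (congrFun hve0 _)
      · simp [he01, he01.symm]
    case inr.inl =>
      convert hipC10' using 3
      · exact congrFun hve0 _
      · exact congrArg _ (congrFun hve1 _)
      · simp [he01, he01.symm]
    case inr.inr =>
      convert hipC11' using 3
      · exact congrFun hve1 _
      · exact congrArg _ (congrFun hve1 _)
      · simp [he01, he01.symm]
  obtain ⟨b, hbext⟩ := horth.exists_orthonormalBasis_extension_of_card_eq
    (finrank_euclideanSpace (𝕜 := ℂ) (ι := Fin n))
  have hbe0 : b e0 = C0 := by
    rw [hbext e0 (by left; rfl)]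
    exact hve0
  have hbe1 : b e1 = C1 := by
    rw [hbext e1 (by right; rfl)]
    exact hve1
  -- matrices
  obtain ⟨Vt, hVtdef⟩ : ∃ Vt : Matrix (Fin n) (Fin n) ℂ, ∀ i j, Vt i j = b j i :=
    ⟨Matrix.of fun i j => b j i, fun _ _ => rfl⟩
  have hVtU : Vt ∈ Matrix.unitaryGroup (Fin n) ℂ := by
    rw [Matrix.mem_unitaryGroup_iff']
    ext j k'
    rw [Matrix.mul_apply, Matrix.one_apply]
    have hiner := orthonormal_iff_ite.mp b.orthonormal j k'
    rw [PiLp.inner_apply] at hiner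
    simp only [RCLike.inner_apply] at hiner
    calc ∑ i, (star Vt) j i * Vt i k'
        = ∑ i, (starRingEnd ℂ) (b j i) * b k' i := by
          apply Finset.sum_congr rfl
          intro i _
          rw [Matrix.star_apply, hVtdef, hVtdef, Complex.star_def]
      _ = if j = k' then 1 else 0 := by
            rw [← hiner]; exact Finset.sum_congr rfl (fun i _ => mul_comm _ _)
  obtain ⟨E, hEsame, hEdiff⟩ : ∃ E : Matrix (Fin n) (Fin n) ℂ,
      (∀ i, E i i = if (i : ℕ) < 2 then 1 else 0) ∧ (∀ i j, i ≠ j → E i j = 0) :=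
    ⟨Matrix.of fun i j => if i = j ∧ (i : ℕ) < 2 then 1 else 0,
      fun i => by simp, fun i j hij => by simp [Matrix.of_apply, hij]⟩
  have hEreal : ∀ i j, (E i j).im = 0 := by
    intro i j
    by_cases hij : i = j
    · subst hij; rw [hEsame]; split_ifs <;> simp
    · rw [hEdiff i j hij]; simp
  obtain ⟨hwU, hwre⟩ := hw
  have hws1 : star w * w = 1 := Matrix.mem_unitaryGroup_iff'.mp hwU
  have hwinv : w⁻¹ = star w := Matrix.inv_eq_left_inv hws1
  obtain ⟨Q0, hQ0def⟩ : ∃ Q0 : Matrix (Fin n) (Fin n) ℂ, Q0 = Vt * star w := ⟨_, rfl⟩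
  have hQ0U : Q0 ∈ Matrix.unitaryGroup (Fin n) ℂ := by
    rw [hQ0def]
    exact mul_mem hVtU (Unitary.star_mem hwU)
  have hQ0mem : Q0 ∈ blockUnitary n k ns * realOrthogonal n * H := by
    rw [hEQ]; exact hQ0U
  obtain ⟨lg, hlgmem, h, hh, hlgh⟩ := Set.mem_mul.mp hQ0mem
  obtain ⟨l, hl, g, hg, hlgdef⟩ := Set.mem_mul.mp hlgmem
  rw [hH] at hh
  obtain ⟨d, hd, hhdef⟩ := hh
  have hQeq : l * g * (w * d * star w) = Q0 := by
    rw [← hwinv, ← hlgh, ← hlgdef]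
    simp only [hhdef]
  have hgre := hg.2
  have hls : star l * l = 1 := Matrix.mem_unitaryGroup_iff'.mp hl.1
  have hll : l * star l = 1 := Matrix.mem_unitaryGroup_iff.mp hl.1
  have hdd : d * star d = 1 := Matrix.mem_unitaryGroup_iff.mp hd.1
  -- d commutes with E
  have hdE : d * E = E * d := by
    ext i j
    rw [Matrix.mul_apply, Matrix.mul_apply]
    rw [Finset.sum_eq_single j (fun s _ hs => by rw [hEdiff s j hs, mul_zero])
      (fun hj => absurd (Finset.mem_univ j) hj)]
    rw [Finset.sum_eq_single i (fun s _ hs => by rw [hEdiff i s (Ne.symm hs), zero_mul])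
      (fun hi => absurd (Finset.mem_univ i) hi)]
    rw [hEsame, hEsame]
    have hdz : (i : ℕ) < 2 → ¬ ((j : ℕ) < 2) → d i j = 0 := by
      intro h1 h2
      apply hd.2
      rw [blkIdx_two hn4 i.isLt, blkIdx_two hn4 j.isLt]
      simp [h1, h2]
    have hdz' : ¬ ((i : ℕ) < 2) → (j : ℕ) < 2 → d i j = 0 := by
      intro h1 h2
      apply hd.2
      rw [blkIdx_two hn4 i.isLt, blkIdx_two hn4 j.isLt]
      simp [h1, h2]
    by_cases h1 : (i : ℕ) < 2 <;> by_cases h2 : (j : ℕ) < 2 <;>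
      simp [h1, h2, hdz, hdz']
  -- the key algebraic identity
  have hQform : Q0 * ((w * (E * star w)) * star Q0) = Vt * (E * star Vt) := by
    rw [hQ0def]
    simp only [StarMul.star_mul, star_star, mul_assoc]
    rw [← mul_assoc (star w) w, hws1, one_mul]
    rw [← mul_assoc (star w) w, hws1, one_mul]
  have hkey : star l * (Q0 * ((w * (E * star w)) * star Q0)) * l
      = g * (w * (E * (star w * star g))) := by
    rw [← hQeq]
    simp only [StarMul.star_mul, star_star, mul_assoc]
    rw [hls, mul_one]
    rw [← mul_assoc (star w) w, hws1, one_mul]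
    rw [← mul_assoc (star w) w, hws1, one_mul]
    rw [← mul_assoc d E, hdE, mul_assoc E d]
    rw [← mul_assoc d (star d), hdd, one_mul]
    rw [← mul_assoc (star l) l, hls, one_mul]
  have hmat : star l * (Vt * (E * star Vt)) * l = g * (w * (E * (star w * star g))) := by
    rw [← hQform]; exact hkey
  have hNreal : ∀ i j, ((star l * (Vt * (E * star Vt)) * l) i j).im = 0 := by
    rw [hmat]
    exact real_mul hgre (real_mul hwre (real_mul hEreal
      (real_mul (real_star hwre) (real_star hgre))))
  -- entries of the middle matrix
  have hbe0' : ∀ x, Vt x e0 = C0 x := by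
    intro x; rw [hVtdef]; exact congrFun hbe0 x
  have hbe1' : ∀ x, Vt x e1 = C1 x := by
    intro x; rw [hVtdef]; exact congrFun hbe1 x
  have hMent : ∀ s t : Fin n, (Vt * (E * star Vt)) s t
      = C0 s * (starRingEnd ℂ) (C0 t) + C1 s * (starRingEnd ℂ) (C1 t) := by
    intro s t
    rw [Matrix.mul_apply]
    have hinner : ∀ y : Fin n, (E * star Vt) y t
        = if (y : ℕ) < 2 then (starRingEnd ℂ) (Vt t y) else 0 := by
      intro y
      rw [Matrix.mul_apply]
      rw [Finset.sum_eq_single y (fun s' _ hs' => by rw [hEdiff y s' (Ne.symm hs'), zero_mul])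
        (fun hy => absurd (Finset.mem_univ y) hy)]
      rw [hEsame, Matrix.star_apply, Complex.star_def]
      split_ifs <;> simp
    have hz : ∀ y : Fin n, y ≠ e0 → y ≠ e1 →
        Vt s y * (E * star Vt) y t = 0 := by
      intro y hy0 hy1
      rw [hinner]
      have : ¬ ((y : ℕ) < 2) := by
        have h0 : (y : ℕ) ≠ 0 := fun hc => hy0 (Fin.ext (by rw [hc, he0v]))
        have h1 : (y : ℕ) ≠ 1 := fun hc => hy1 (Fin.ext (by rw [hc, he1v]))
        omega
      rw [if_neg this, mul_zero]
    rw [sum_two _ e0 e1 he01 hz]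
    rw [hinner, hinner, if_pos (by rw [he0v]; omega), if_pos (by rw [he1v]; omega)]
    rw [hbe0', hbe0', hbe1', hbe1']
  -- generic entry evaluation of N = star l * M * l
  have hNval : ∀ (qa qb ia ib : Fin n),
      (∀ s : Fin n, s ≠ qa → (C0 s = 0 ∧ C1 s = 0) ∨ l s ia = 0) →
      (∀ t : Fin n, t ≠ qb → (C0 t = 0 ∧ C1 t = 0) ∨ l t ib = 0) →
      (star l * (Vt * (E * star Vt)) * l) ia ib
        = (starRingEnd ℂ) (l qa ia)
            * (C0 qa * (starRingEnd ℂ) (C0 qb) + C1 qa * (starRingEnd ℂ) (C1 qb))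
            * l qb ib := by
    intro qa qb ia ib hA hB
    rw [Matrix.mul_apply]
    rw [Finset.sum_eq_single qb ?side1 (fun hqb => absurd (Finset.mem_univ qb) hqb)]
    case side1 =>
      intro t _ ht
      rcases hB t ht with ⟨h0, h1⟩ | hl0
      · have hz : (star l * (Vt * (E * star Vt))) ia t = 0 := by
          rw [Matrix.mul_apply]
          apply Finset.sum_eq_zero
          intro s _
          rw [hMent, h0, h1]
          simp
        rw [hz, zero_mul]
      · rw [hl0, mul_zero]
    rw [Matrix.mul_apply]
    rw [Finset.sum_eq_single qa ?side2 (fun hqa => absurd (Finset.mem_univ qa) hqa)]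
    case side2 =>
      intro s _ hs
      rcases hA s hs with ⟨h0, h1⟩ | hl0
      · rw [hMent, h0, h1]; simp
      · rw [Matrix.star_apply, hl0]; simp
    rw [hMent, Matrix.star_apply, Complex.star_def]
  -- pick a nonzero entry in each relevant row of l
  have hex : ∀ qq : Fin n, ∃ ii : Fin n, l qq ii ≠ 0 := by
    intro qq
    by_contra hno
    push_neg at hno
    have h1 : (l * star l) qq qq = 1 := by rw [hll, Matrix.one_apply_eq]
    rw [Matrix.mul_apply] at h1
    simp [hno] at h1
  obtain ⟨i0, hi0⟩ := hex q0
  obtain ⟨i1, hi1⟩ := hex q1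
  obtain ⟨i2, hi2⟩ := hex q2
  have hbi0 : blkIdx ns k (i0 : ℕ) = 0 := by
    by_contra hne
    exact hi0 (hl.2 q0 i0 (by rw [hb0]; exact fun hc => hne hc.symm))
  have hbi1 : blkIdx ns k (i1 : ℕ) = 1 := by
    by_contra hne
    exact hi1 (hl.2 q1 i1 (by rw [hb1]; exact fun hc => hne hc.symm))
  have hbi2 : blkIdx ns k (i2 : ℕ) = 2 := by
    by_contra hne
    exact hi2 (hl.2 q2 i2 (by rw [hb2]; exact fun hc => hne hc.symm))
  -- side conditions for the three entries
  have cond0 : ∀ s : Fin n, s ≠ q0 → (C0 s = 0 ∧ C1 s = 0) ∨ l s i0 = 0 := by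
    intro s hs
    by_cases h1 : s = q1
    · right; subst h1; exact hl.2 q1 i0 (by rw [hb1, hbi0]; omega)
    by_cases h2 : s = q2
    · right; subst h2; exact hl.2 q2 i0 (by rw [hb2, hbi0]; omega)
    by_cases h3 : s = q3
    · right; subst h3; exact hl.2 q3 i0 (by rw [hb3, hbi0]; omega)
    · exact Or.inl ⟨hC0zero s hs h1 h2 h3, hC1zero s hs h1 h2 h3⟩
  have cond1 : ∀ s : Fin n, s ≠ q1 → (C0 s = 0 ∧ C1 s = 0) ∨ l s i1 = 0 := by
    intro s hs
    by_cases h1 : s = q0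
    · right; subst h1; exact hl.2 q0 i1 (by rw [hb0, hbi1]; omega)
    by_cases h2 : s = q2
    · right; subst h2; exact hl.2 q2 i1 (by rw [hb2, hbi1]; omega)
    by_cases h3 : s = q3
    · right; subst h3; exact hl.2 q3 i1 (by rw [hb3, hbi1]; omega)
    · exact Or.inl ⟨hC0zero s h1 hs h2 h3, hC1zero s h1 hs h2 h3⟩
  have cond2 : ∀ s : Fin n, s ≠ q2 → (C0 s = 0 ∧ C1 s = 0) ∨ l s i2 = 0 := by
    intro s hs
    by_cases h1 : s = q0
    · right; subst h1; exact hl.2 q0 i2 (by rw [hb0, hbi2]; omega)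
    by_cases h2 : s = q1
    · right; subst h2; exact hl.2 q1 i2 (by rw [hb1, hbi2]; omega)
    by_cases h3 : s = q3
    · right; subst h3; exact hl.2 q3 i2 (by rw [hb3, hbi2]; omega)
    · exact Or.inl ⟨hC0zero s h1 h2 hs h3, hC1zero s h1 h2 hs h3⟩
  -- the three entry values
  have hv01 := hNval q0 q1 i0 i1 cond0 cond1
  have hv12 := hNval q1 q2 i1 i2 cond1 cond2
  have hv20 := hNval q2 q0 i2 i0 cond2 cond0
  rw [hC0q0, hC0q1, hC1q0, hC1q1] at hv01
  rw [hC0q1, hC0q2, hC1q1, hC1q2] at hv12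
  rw [hC0q2, hC0q0, hC1q2, hC1q0] at hv20
  have hcj : (starRingEnd ℂ) ((1:ℂ)/2) = 1/2 := by
    simp [map_div₀, _root_.map_one, _root_.map_ofNat]
  have hcjI : (starRingEnd ℂ) (Complex.I/2) = -(Complex.I/2) := by
    rw [map_div₀, Complex.conj_I]
    simp [_root_.map_ofNat, neg_div]
  have quarter : ∀ z : ℂ, (z * ((1:ℂ)/4)).im = 0 → z.im = 0 := by
    intro z hz
    rw [Complex.mul_im] at hz
    norm_num at hz
    exact hz
  have k1 : ((starRingEnd ℂ) (l q0 i0) * l q1 i1).im = 0 := by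
    apply quarter
    have h := hNreal i0 i1
    rw [hv01] at h
    rw [show (starRingEnd ℂ) (l q0 i0)
        * ((1:ℂ)/2 * (starRingEnd ℂ) ((1:ℂ)/2) + 0 * (starRingEnd ℂ) ((1:ℂ)/2)) * l q1 i1
        = ((starRingEnd ℂ) (l q0 i0) * l q1 i1) * ((1:ℂ)/4) from by rw [hcj]; ring] at h
    exact h
  have k2 : ((starRingEnd ℂ) (l q1 i1) * l q2 i2 * (1 - Complex.I)).im = 0 := by
    apply quarter
    have h := hNreal i1 i2
    rw [hv12] at h
    rw [show (starRingEnd ℂ) (l q1 i1)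
        * ((1:ℂ)/2 * (starRingEnd ℂ) ((1:ℂ)/2) + (1:ℂ)/2 * (starRingEnd ℂ) (Complex.I/2)) * l q2 i2
        = ((starRingEnd ℂ) (l q1 i1) * l q2 i2 * (1 - Complex.I)) * ((1:ℂ)/4) from by
          rw [hcj, hcjI]; ring] at h
    exact h
  have k3 : ((starRingEnd ℂ) (l q2 i2) * l q0 i0).im = 0 := by
    apply quarter
    have h := hNreal i2 i0
    rw [hv20] at h
    rw [show (starRingEnd ℂ) (l q2 i2)
        * ((1:ℂ)/2 * (starRingEnd ℂ) ((1:ℂ)/2) + Complex.I/2 * (starRingEnd ℂ) (0:ℂ)) * l q0 i0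
        = ((starRingEnd ℂ) (l q2 i2) * l q0 i0) * ((1:ℂ)/4) from by
          rw [hcj, map_zero]; ring] at h
    exact h
  -- final contradiction
  have hfim : ((starRingEnd ℂ) (l q0 i0) * l q1 i1
      * ((starRingEnd ℂ) (l q1 i1) * l q2 i2 * (1 - Complex.I))
      * ((starRingEnd ℂ) (l q2 i2) * l q0 i0)).im = 0 :=
    imzero_mul _ _ (imzero_mul _ _ k1 k2) k3
  have hpr : (starRingEnd ℂ) (l q0 i0) * l q1 i1
      * ((starRingEnd ℂ) (l q1 i1) * l q2 i2 * (1 - Complex.I))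
      * ((starRingEnd ℂ) (l q2 i2) * l q0 i0)
      = (((Complex.normSq (l q0 i0) * Complex.normSq (l q1 i1)
          * Complex.normSq (l q2 i2) : ℝ)) : ℂ) * (1 - Complex.I) := by
    rw [show (starRingEnd ℂ) (l q0 i0) * l q1 i1
        * ((starRingEnd ℂ) (l q1 i1) * l q2 i2 * (1 - Complex.I))
        * ((starRingEnd ℂ) (l q2 i2) * l q0 i0)
        = (l q0 i0 * (starRingEnd ℂ) (l q0 i0))
          * ((l q1 i1 * (starRingEnd ℂ) (l q1 i1))
            * ((l q2 i2 * (starRingEnd ℂ) (l q2 i2)) * (1 - Complex.I))) from by ring]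
    rw [Complex.mul_conj, Complex.mul_conj, Complex.mul_conj]
    push_cast
    ring
  rw [hpr] at hfim
  rw [Complex.mul_im] at hfim
  simp only [Complex.ofReal_re, Complex.ofReal_im, Complex.sub_im, Complex.sub_re,
    Complex.one_im, Complex.one_re, Complex.I_im, Complex.I_re, zero_mul, add_zero,
    zero_sub, mul_neg, mul_one, neg_eq_zero] at hfim
  have hp0 : 0 < Complex.normSq (l q0 i0) := Complex.normSq_pos.mpr hi0
  have hp1 : 0 < Complex.normSq (l q1 i1) := Complex.normSq_pos.mpr hi1
  have hp2 : 0 < Complex.normSq (l q2 i2) := Complex.normSq_pos.mpr hi2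
  exact (mul_pos (mul_pos hp0 hp1) hp2).ne' hfim
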